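/- arXiv:2106.04379 — 7 statements merged into one kernel-verified Lean document; each statement's English description precedes it below -/
import Mathlib

section
/- Fix a policy π and initial distribution P_0, and let k ≥ 1. If for all timesteps t ≥ k, all z_t ∈ Z, all histories {a_{t-i}, z_{t-i}}_{i=1}^k, and all x_t ∈ X with φ(x_t) = z_t, it holds that B_{φ,t}^{π(k)}(x_t | z_t, {a_{t-i}, z_{t-i}}_{i=1}^k) = B_{φ,t}^{π(k-1)}(x_t | z_t, {a_{t-i}, z_{t-i}}_{i=1}^{k-1}), then for all z_{t+1} ∈ Z and x_{t+1} ∈ X with φ(x_{t+1}) = z_{t+1}: B_{φ,t}^{π(k+1)}(x_{t+1} | z_{t+1}, {a_{t-i}, z_{t-i}}_{i=0}^k) = B_{φ,t}^{π(k)}(x_{t+1} | z_{t+1}, {a_{t-i}, z_{t-i}}_{i=0}^{k-1}). -/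
namespace MarkovAbstraction

noncomputable section

variable {X A Z : Type*} [Fintype X] [Fintype A] [Fintype Z] [DecidableEq Z]

/-- `T x' a x` is the probability of transitioning to `x'` given action `a` in state `x`;
`T (· | a, x)` must be a probability distribution for each `a, x`. -/
def IsKernel (T : X → A → X → ℝ) : Prop :=
  (∀ x' a x, 0 ≤ T x' a x) ∧ ∀ a x, ∑ x' : X, T x' a x = 1

/-- `π t a x` is the probability of choosing action `a` in state `x` at timestep `t`. -/
def IsPolicy (π : ℕ → A → X → ℝ) : Prop :=
  (∀ t a x, 0 ≤ π t a x) ∧ ∀ t x, ∑ a : A, π t a x = 1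

/-- A probability distribution over ground states. -/
def IsDist (P0 : X → ℝ) : Prop :=
  (∀ x, 0 ≤ P0 x) ∧ ∑ x : X, P0 x = 1

/-- Membership in the policy class `Π_φ`: the policy assigns equal action probabilities to
ground states with the same abstract state. -/
def InPolicyClass (φ : X → Z) (π : ℕ → A → X → ℝ) : Prop :=
  ∀ t a x₁ x₂, φ x₁ = φ x₂ → π t a x₁ = π t a x₂

/-- State visitation distribution `P_t^π(x)`. -/
def Pvis (T : X → A → X → ℝ) (π : ℕ → A → X → ℝ) (P0 : X → ℝ) : ℕ → X → ℝ
  | 0 => P0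
  | t + 1 => fun x => ∑ a : A, ∑ xp : X, T x a xp * π t a xp * Pvis T π P0 t xp

/-- Belief distribution `B_{φ,t}^π(x|z)`. -/
def Bel0 (T : X → A → X → ℝ) (π : ℕ → A → X → ℝ) (P0 : X → ℝ) (φ : X → Z)
    (t : ℕ) (z : Z) (x : X) : ℝ :=
  (if φ x = z then Pvis T π P0 t x else 0) /
    ∑ xt : X, if φ xt = z then Pvis T π P0 t xt else 0

/-- `k`-step belief distribution `B_{φ,t}^{π(k)}(x | z_t, {a_{t-i}, z_{t-i}}_{i=1}^k)`,
where the history `[(a_{t-1}, z_{t-1}), ..., (a_{t-k}, z_{t-k})]` is listed most recent first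
(so `k` is the length of the history list, and the empty history gives `B_{φ,t}^{π(0)} = B_{φ,t}^π`). -/
def BelK (T : X → A → X → ℝ) (π : ℕ → A → X → ℝ) (P0 : X → ℝ) (φ : X → Z)
    (t : ℕ) : List (A × Z) → Z → X → ℝ
  | [], z, x => Bel0 T π P0 φ t z x
  | (a, zp) :: h, z, x =>
      (if φ x = z then ∑ xp : X, T x a xp * BelK T π P0 φ t h zp xp else 0) /
        ∑ xt : X, if φ xt = z then
            ∑ xtp : X, if φ xtp = zp then T xt a xtp * BelK T π P0 φ t h zp xtp else 0
          else 0

/-- Expected next-state dynamics `P_t^π(x'|x)`. -/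
def PNext (T : X → A → X → ℝ) (π : ℕ → A → X → ℝ) (t : ℕ) (x' x : X) : ℝ :=
  ∑ a : A, T x' a x * π t a x

/-- Inverse dynamics model `I_t^π(a|x',x)`. -/
def InvModel (T : X → A → X → ℝ) (π : ℕ → A → X → ℝ) (t : ℕ) (a : A) (x' x : X) : ℝ :=
  T x' a x * π t a x / PNext T π t x' x

/-- `P_t^π(x'|z) = Σ_{x̃} P_t^π(x'|x̃) B_{φ,t}^π(x̃|z)`. -/
def PNextZ (T : X → A → X → ℝ) (π : ℕ → A → X → ℝ) (P0 : X → ℝ) (φ : X → Z)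
    (t : ℕ) (x' : X) (z : Z) : ℝ :=
  ∑ x : X, PNext T π t x' x * Bel0 T π P0 φ t z x

/-- Abstract next-state dynamics `P_{φ,t}^π(z'|z) = Σ_{x'∈z'} P_t^π(x'|z)`. -/
def PZNext (T : X → A → X → ℝ) (π : ℕ → A → X → ℝ) (P0 : X → ℝ) (φ : X → Z)
    (t : ℕ) (z' z : Z) : ℝ :=
  ∑ x' : X, if φ x' = z' then PNextZ T π P0 φ t x' z else 0

/-- Abstract-state visitation distribution `P_{φ,t}^π(z') = Σ_{x'∈z'} P_t^π(x')`. -/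
def PZ (T : X → A → X → ℝ) (π : ℕ → A → X → ℝ) (P0 : X → ℝ) (φ : X → Z)
    (t : ℕ) (z' : Z) : ℝ :=
  ∑ x' : X, if φ x' = z' then Pvis T π P0 t x' else 0

/-- Abstract transition model `T_{φ,t}^π(z'|a,z)`. -/
def TZ (T : X → A → X → ℝ) (π : ℕ → A → X → ℝ) (P0 : X → ℝ) (φ : X → Z)
    (t : ℕ) (z' : Z) (a : A) (z : Z) : ℝ :=
  ∑ x' : X, if φ x' = z' then
      ∑ x : X, if φ x = z then T x' a x * Bel0 T π P0 φ t z x else 0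
    else 0

/-- Abstract inverse model `I_{φ,t}^π(a|z',z) = T_{φ,t}^π(z'|a,z) π_{φ,t}(a|z) / P_{φ,t}^π(z'|z)`,
where the common policy value `π_{φ,t}(a|z)` is given via a representative ground state `x ∈ z`
(well-defined when `π ∈ Π_φ`). -/
def InvModelZ (T : X → A → X → ℝ) (π : ℕ → A → X → ℝ) (P0 : X → ℝ) (φ : X → Z)
    (t : ℕ) (a : A) (z' z : Z) (x : X) : ℝ :=
  TZ T π P0 φ t z' a z * π t a x / PZNext T π P0 φ t z' z

/-- `C_{φ,t}^{π(k)}(x_t)` for a (history-conditioned) belief function `b`. -/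
def CK (π : ℕ → A → X → ℝ) (t : ℕ) (a : A) (b : X → ℝ) (x : X) : ℝ :=
  π t a x * b x / ∑ xt : X, π t a xt * b xt

/-- History-conditioned abstract transition model
`T_{φ,t}^{π(k)}(z₁ | a, z, history) = Σ_{x₁∈z₁} Σ_{x∈z} T(x₁|a,x) C_{φ,t}^{π(k)}(x)`,
where `b` is the corresponding history-conditioned belief. -/
def TK (T : X → A → X → ℝ) (φ : X → Z) (π : ℕ → A → X → ℝ)
    (t : ℕ) (a : A) (z : Z) (b : X → ℝ) (z1 : Z) : ℝ :=
  ∑ x1 : X, if φ x1 = z1 then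
      ∑ x : X, if φ x = z then T x1 a x * CK π t a b x else 0
    else 0

/-- History-conditioned abstract reward `R_{φ,t}^{π(k)}(z₁, a, z, history)`. -/
def RK (Rw T : X → A → X → ℝ) (φ : X → Z) (π : ℕ → A → X → ℝ)
    (t : ℕ) (a : A) (z : Z) (b : X → ℝ) (z1 : Z) : ℝ :=
  (∑ x1 : X, if φ x1 = z1 then
      ∑ x : X, if φ x = z then Rw x1 a x * T x1 a x * CK π t a b x else 0
    else 0) / TK T φ π t a z b z1

/-- Backwards dynamics `P_t^π(x, a | x')`. -/
def PBack (T : X → A → X → ℝ) (π : ℕ → A → X → ℝ) (P0 : X → ℝ)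
    (t : ℕ) (x : X) (a : A) (x' : X) : ℝ :=
  T x' a x * π t a x * Pvis T π P0 t x /
    ∑ xt : X, ∑ ap : A, T x' ap xt * π t ap xt * Pvis T π P0 t xt


theorem belK_zero_of_ne (T : X → A → X → ℝ) (π : ℕ → A → X → ℝ) (P0 : X → ℝ) (φ : X → Z)
    (t : ℕ) (h : List (A × Z)) (z : Z) (x : X) (hx : φ x ≠ z) :
    BelK T π P0 φ t h z x = 0 := by
  cases h with
  | nil => simp [BelK, Bel0, hx]
  | cons p hs => obtain ⟨a, zp⟩ := p; simp [BelK, hx]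

/-- **Lemma 2.** If the `k`-step and `(k-1)`-step belief distributions agree for all
timesteps `t ≥ k`, all abstract states, all histories of length `k`, and all compatible
ground states, then the `(k+1)`-step and `k`-step belief distributions agree (where the
`(k+1)`-step history extends the `k`-step history `hist ++ [p]` by one more recent pair
`(a0, zt)`, and the `k`-step one extends `hist`). -/
theorem belief_step_to_belief_step
    (T : X → A → X → ℝ) (π : ℕ → A → X → ℝ) (P0 : X → ℝ) (φ : X → Z)
    (hT : IsKernel T) (hπ : IsPolicy π) (hP0 : IsDist P0)
    -- positivity of the denominators appearing in the definitions:
    (hden0 : ∀ (t : ℕ) (z : Z), 0 < ∑ x : X, if φ x = z then Pvis T π P0 t x else 0)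
    (hden : ∀ (t : ℕ) (a : A) (zp : Z) (h : List (A × Z)) (z : Z),
      0 < ∑ xt : X, if φ xt = z then
          ∑ xtp : X, if φ xtp = zp then T xt a xtp * BelK T π P0 φ t h zp xtp else 0
        else 0)
    (k : ℕ) (hk : 1 ≤ k)
    (hyp : ∀ t : ℕ, k ≤ t → ∀ (h : List (A × Z)) (p : A × Z), (h ++ [p]).length = k →
      ∀ (zt : Z) (x : X), φ x = zt →
        BelK T π P0 φ t (h ++ [p]) zt x = BelK T π P0 φ t h zt x) :
    ∀ t : ℕ, k ≤ t → ∀ (h : List (A × Z)) (p : A × Z), (h ++ [p]).length = k →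
      ∀ (a0 : A) (zt z1 : Z) (x1 : X), φ x1 = z1 →
        BelK T π P0 φ t ((a0, zt) :: (h ++ [p])) z1 x1
          = BelK T π P0 φ t ((a0, zt) :: h) z1 x1 := by
  intro t ht h p hlen a0 zt z1 x1 hx1
  have key : ∀ x : X, BelK T π P0 φ t (h ++ [p]) zt x = BelK T π P0 φ t h zt x := by
    intro x
    by_cases hx : φ x = zt
    · exact hyp t ht h p hlen zt x hx
    · rw [belK_zero_of_ne T π P0 φ t (h ++ [p]) zt x hx,
        belK_zero_of_ne T π P0 φ t h zt x hx]
  show BelK T π P0 φ t ((a0, zt) :: (h ++ [p])) z1 x1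
      = BelK T π P0 φ t ((a0, zt) :: h) z1 x1
  rw [BelK, BelK]
  simp only [key]

end

end MarkovAbstraction
end

section
/- (Theorem 1, main result.) Suppose φ : X → Z is an abstraction of the MDP M = (X, A, R, T, γ) such that for every policy π in the policy class Π_φ and every timestep t the following two conditions hold: (Inverse Model) I_{φ,t}^π(a|z',z) = I_t^π(a|x',x) for all a ∈ A, z, z' ∈ Z, and all x, x' ∈ X with φ(x) = z and φ(x') = z'; and (Density Ratio) P_{φ,t}^π(z'|z)/P_{φ,t}^π(z') = P_t^π(x'|z)/P_t^π(x') for all z, z' ∈ Z and all x' ∈ X with φ(x') = z'. Then φ is a Markov abstraction: for every π ∈ Π_φ, every t, every k ≥ 1, every history (z_t, {a_{t-i}, z_{t-i}}_{i=1}^k), and every x ∈ X, B_{φ,t}^{π(k)}(x | z_t, {a_{t-i}, z_{t-i}}_{i=1}^k) = B_{φ,t}^π(x | z_t). -/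
namespace MarkovAbstraction

noncomputable section

variable {X A Z : Type*} [Fintype X] [Fintype A] [Fintype Z] [DecidableEq Z]

/-- **Theorem 1 (main result).** If the Inverse Model condition and the Density Ratio
condition hold for every policy in the policy class `Π_φ` and every timestep `t`, then
`φ` is a Markov abstraction: for every `π ∈ Π_φ`, every `t`, every `k ≥ 1` (i.e. every
nonempty history), and every ground state `x`, the `k`-step belief distribution equals
the `0`-step belief distribution. -/
theorem markov_abstraction_sufficient_conditions
    (T : X → A → X → ℝ) (P0 : X → ℝ) (φ : X → Z)
    (hT : IsKernel T) (hP0 : IsDist P0)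
    -- positivity of the denominators appearing in the definitions:
    (hpos : ∀ π : ℕ → A → X → ℝ, IsPolicy π → InPolicyClass φ π →
      (∀ (t : ℕ) (z : Z), 0 < ∑ x : X, if φ x = z then Pvis T π P0 t x else 0) ∧
      (∀ (t : ℕ) (a : A) (zp : Z) (h : List (A × Z)) (z : Z),
        0 < ∑ xt : X, if φ xt = z then
            ∑ xtp : X, if φ xtp = zp then T xt a xtp * BelK T π P0 φ t h zp xtp else 0
          else 0) ∧
      (∀ (t : ℕ) (x' x : X), 0 < PNext T π t x' x) ∧
      (∀ (t : ℕ) (x : X), 0 < Pvis T π P0 t x) ∧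
      (∀ (t : ℕ) (z' z : Z), 0 < PZNext T π P0 φ t z' z) ∧
      (∀ (t : ℕ) (z' : Z), 0 < PZ T π P0 φ t z'))
    -- Inverse Model condition:
    (hInv : ∀ π : ℕ → A → X → ℝ, IsPolicy π → InPolicyClass φ π →
      ∀ (t : ℕ) (a : A) (z z' : Z) (x x' : X), φ x = z → φ x' = z' →
        InvModelZ T π P0 φ t a z' z x = InvModel T π t a x' x)
    -- Density Ratio condition:
    (hRatio : ∀ π : ℕ → A → X → ℝ, IsPolicy π → InPolicyClass φ π →
      ∀ (t : ℕ) (z z' : Z) (x' : X), φ x' = z' →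
        PZNext T π P0 φ t z' z / PZ T π P0 φ t z'
          = PNextZ T π P0 φ t x' z / Pvis T π P0 t x') :
    ∀ π : ℕ → A → X → ℝ, IsPolicy π → InPolicyClass φ π →
      ∀ (t : ℕ) (hist : List (A × Z)), hist ≠ [] →
        ∀ (z : Z) (x : X), BelK T π P0 φ t hist z x = Bel0 T π P0 φ t z x := by
  intro π hπ hπφ t
  have hXne : Nonempty X := by
    by_contra h
    rw [not_nonempty_iff] at h
    have h2 := hP0.2
    simp at h2
  have hAne : Nonempty A := by
    by_contra h
    rw [not_nonempty_iff] at h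
    obtain ⟨x⟩ := hXne
    have h2 := hπ.2 0 x
    simp at h2
  have hcard : (0 : ℝ) < (Fintype.card A : ℝ) := by
    exact_mod_cast Fintype.card_pos
  have hu : (0 : ℝ) < (Fintype.card A : ℝ)⁻¹ := inv_pos.mpr hcard
  obtain ⟨π', hπ'_def⟩ : ∃ π' : ℕ → A → X → ℝ,
      π' = fun s a x => if s = t then (Fintype.card A : ℝ)⁻¹ else π s a x := ⟨_, rfl⟩
  have hπ' : IsPolicy π' := by
    constructor
    · intro s a x
      by_cases hs : s = t <;> simp [hπ'_def, hs, hu.le, hπ.1 s a x]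
    · intro s x
      by_cases hs : s = t
      · simp only [hπ'_def, hs, if_pos rfl]
        rw [Finset.sum_const, Finset.card_univ, nsmul_eq_mul]
        exact mul_inv_cancel₀ hcard.ne'
      · simpa [hπ'_def, hs] using hπ.2 s x
  have hπ'φ : InPolicyClass φ π' := by
    intro s a x1 x2 hx
    by_cases hs : s = t <;> simp [hπ'_def, hs, hπφ s a x1 x2 hx]
  have hPvis : ∀ s, s ≤ t → Pvis T π' P0 s = Pvis T π P0 s := by
    intro s
    induction s with
    | zero => intro _; rfl
    | succ s ih =>
      intro hs
      have h1 : s ≤ t := Nat.le_of_succ_le hs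
      have h2 : s ≠ t := by omega
      funext x
      simp only [Pvis, ih h1]
      refine Finset.sum_congr rfl fun a _ => Finset.sum_congr rfl fun xp _ => ?_
      simp [hπ'_def, h2]
  have hPt := hPvis t le_rfl
  have hB0 : Bel0 T π' P0 φ t = Bel0 T π P0 φ t := by
    funext z x
    simp only [Bel0, hPt]
  have hPZeq : ∀ z, PZ T π' P0 φ t z = PZ T π P0 φ t z := by
    intro z; simp only [PZ, hPt]
  have hTZeq : ∀ z a zp, TZ T π' P0 φ t z a zp = TZ T π P0 φ t z a zp := by
    intro z a zp; simp only [TZ, hB0]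
  obtain ⟨hp1, hp2, hp3, hp4, hp5, hp6⟩ := hpos π hπ hπφ
  obtain ⟨hq1, hq2, hq3, hq4, hq5, hq6⟩ := hpos π' hπ' hπ'φ
  have hB0zero : ∀ (z : Z) (x : X), φ x ≠ z → Bel0 T π P0 φ t z x = 0 := by
    intro z x hx
    simp [Bel0, hx]
  -- the key one-step propagation identity
  have key : ∀ (a : A) (zp z : Z) (x : X), φ x = z →
      (∑ xp : X, T x a xp * Bel0 T π P0 φ t zp xp)
        = TZ T π P0 φ t z a zp * Pvis T π P0 t x / PZ T π P0 φ t z := by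
    intro a zp z x hx
    have hPZN := hq5 t z zp
    have hT' : ∀ xp : X, φ xp = zp →
        T x a xp = TZ T π P0 φ t z a zp * PNext T π' t x xp
            / PZNext T π' P0 φ t z zp := by
      intro xp hxp
      have h := hInv π' hπ' hπ'φ t a zp z xp x hxp hx
      simp only [InvModelZ, InvModel, hTZeq] at h
      have hpi : π' t a xp = (Fintype.card A : ℝ)⁻¹ := by simp [hπ'_def]
      rw [hpi] at h
      rw [div_eq_div_iff hPZN.ne' (hq3 t x xp).ne'] at h
      rw [eq_div_iff hPZN.ne']
      have h3 : (TZ T π P0 φ t z a zp * PNext T π' t x xp) * (Fintype.card A : ℝ)⁻¹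
          = (T x a xp * PZNext T π' P0 φ t z zp) * (Fintype.card A : ℝ)⁻¹ := by
        linear_combination h
      have h4 := mul_right_cancel₀ hu.ne' h3
      linarith
    have step1 : (∑ xp : X, T x a xp * Bel0 T π P0 φ t zp xp)
        = TZ T π P0 φ t z a zp / PZNext T π' P0 φ t z zp
            * PNextZ T π' P0 φ t x zp := by
      rw [PNextZ, hB0, Finset.mul_sum]
      refine Finset.sum_congr rfl fun xp _ => ?_
      by_cases hxp : φ xp = zp
      · rw [hT' xp hxp]; ring
      · rw [hB0zero zp xp hxp]; ring
    have hr := hRatio π' hπ' hπ'φ t zp z x hx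
    simp only [hPZeq, hPt] at hr
    rw [div_eq_div_iff (hp6 t z).ne' (hp4 t x).ne'] at hr
    rw [step1, div_mul_eq_mul_div, div_eq_div_iff hPZN.ne' (hp6 t z).ne']
    linear_combination (- TZ T π P0 φ t z a zp) * hr
  -- the denominator of the one-step belief update equals the abstract transition model
  have hden : ∀ (a : A) (zp z : Z),
      (∑ xt : X, if φ xt = z then
          ∑ xtp : X, if φ xtp = zp then T xt a xtp * Bel0 T π P0 φ t zp xtp else 0
        else 0) = TZ T π P0 φ t z a zp := by
    intro a zp z
    have h1 : ∀ xt : X, φ xt = z →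
        (∑ xtp : X, if φ xtp = zp then T xt a xtp * Bel0 T π P0 φ t zp xtp else 0)
          = TZ T π P0 φ t z a zp * Pvis T π P0 t xt / PZ T π P0 φ t z := by
      intro xt hxt
      rw [← key a zp z xt hxt]
      refine Finset.sum_congr rfl fun xtp _ => ?_
      by_cases hxtp : φ xtp = zp
      · rw [if_pos hxtp]
      · rw [if_neg hxtp, hB0zero zp xtp hxtp, mul_zero]
    have h2 : (∑ xt : X, if φ xt = z then
          ∑ xtp : X, if φ xtp = zp then T xt a xtp * Bel0 T π P0 φ t zp xtp else 0
        else 0)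
        = (∑ xt : X, if φ xt = z then Pvis T π P0 t xt else 0)
            * (TZ T π P0 φ t z a zp / PZ T π P0 φ t z) := by
      rw [Finset.sum_mul]
      refine Finset.sum_congr rfl fun xt _ => ?_
      by_cases hxt : φ xt = z
      · rw [if_pos hxt, if_pos hxt, h1 xt hxt]; ring
      · rw [if_neg hxt, if_neg hxt, zero_mul]
    rw [h2]
    have hPZ : (∑ xt : X, if φ xt = z then Pvis T π P0 t xt else 0)
        = PZ T π P0 φ t z := rfl
    rw [hPZ]
    field_simp
    exact mul_div_cancel_left₀ _ (hp6 t z).ne'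
  -- main induction on the history
  intro hist
  induction hist with
  | nil => intro h; exact absurd rfl h
  | cons p h ih =>
    intro _ z x
    obtain ⟨a, zp⟩ := p
    have hBh : ∀ xp : X, BelK T π P0 φ t h zp xp = Bel0 T π P0 φ t zp xp := by
      cases h with
      | nil => intro xp; simp [BelK]
      | cons q h' => intro xp; exact ih (by simp) zp xp
    have hTZpos : 0 < TZ T π P0 φ t z a zp := by
      have h2 := hp2 t a zp [] z
      simp only [BelK] at h2
      rwa [hden a zp z] at h2
    simp only [BelK, hBh]
    rw [hden a zp z]
    by_cases hx : φ x = z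
    · rw [if_pos hx, key a zp z x hx, Bel0, if_pos hx]
      have hPZ : (∑ xt : X, if φ xt = z then Pvis T π P0 t xt else 0)
          = PZ T π P0 φ t z := rfl
      rw [hPZ]
      rw [div_div, div_eq_div_iff (mul_pos (hp6 t z) hTZpos).ne' (hp6 t z).ne']
      ring
    · rw [if_neg hx, Bel0, if_neg hx, zero_div, zero_div]

end

end MarkovAbstraction
end

section
/- (Corollary C.2.) Fix an MDP M, abstraction φ, policy π, and initial distribution P_0. If there exists some n ≥ 1, a timestep t, and a history such that B_{φ,t}^{π(n)} ≠ B_{φ,t}^π (the n-step belief distribution differs from the 0-step belief distribution), then already the 1-step belief distribution differs: there exist a timestep t, a history (z_t, a_{t-1}, z_{t-1}), and x ∈ X such that B_{φ,t}^{π(1)}(x | z_t, a_{t-1}, z_{t-1}) ≠ B_{φ,t}^π(x | z_t). -/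
namespace MarkovAbstraction

noncomputable section

variable {X A Z : Type*} [Fintype X] [Fintype A] [Fintype Z] [DecidableEq Z]

/-- **Corollary C.2.** If some `n`-step belief distribution (`n ≥ 1`) differs from the
`0`-step belief distribution, then already some `1`-step belief distribution differs. -/
theorem non_markov_at_n_implies_non_markov_at_one
    (T : X → A → X → ℝ) (π : ℕ → A → X → ℝ) (P0 : X → ℝ) (φ : X → Z)
    (hT : IsKernel T) (hπ : IsPolicy π) (hP0 : IsDist P0)
    -- positivity of the denominators appearing in the definitions:
    (hden0 : ∀ (t : ℕ) (z : Z), 0 < ∑ x : X, if φ x = z then Pvis T π P0 t x else 0)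
    (hden : ∀ (t : ℕ) (a : A) (zp : Z) (h : List (A × Z)) (z : Z),
      0 < ∑ xt : X, if φ xt = z then
          ∑ xtp : X, if φ xtp = zp then T xt a xtp * BelK T π P0 φ t h zp xtp else 0
        else 0)
    (hex : ∃ (n t : ℕ) (hist : List (A × Z)) (z : Z) (x : X),
      1 ≤ n ∧ hist.length = n ∧ BelK T π P0 φ t hist z x ≠ Bel0 T π P0 φ t z x) :
    ∃ (t : ℕ) (a : A) (zp z : Z) (x : X),
      BelK T π P0 φ t [(a, zp)] z x ≠ Bel0 T π P0 φ t z x := by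
  by_contra hcon
  push_neg at hcon
  obtain ⟨n, t, hist, z, x, hn, hlen, hne⟩ := hex
  apply hne
  clear hne hlen hn
  induction hist generalizing z x with
  | nil => rfl
  | cons p h ih =>
    obtain ⟨a, zp⟩ := p
    rw [← hcon t a zp z x]
    simp only [BelK, ih]

end

end MarkovAbstraction
end

section
/- (Theorem 2: given the Inverse Model condition, the Density Ratio condition is necessary.) Suppose φ : X → Z is a Markov abstraction of the MDP M = (X, A, R, T, γ) for every policy in the policy class Π_φ — i.e. B_{φ,t}^{π(k)}(x | z_t, history) = B_{φ,t}^π(x | z_t) for all π ∈ Π_φ, t, k ≥ 1, histories, and x ∈ X — and suppose the Inverse Model condition holds for every timestep t: I_{φ,t}^π(a|z',z) = I_t^π(a|x',x) for all a ∈ A, z, z' ∈ Z, and x, x' ∈ X with φ(x) = z, φ(x') = z'. Then the Density Ratio condition also holds for every timestep t: P_t^π(x'|z) / P_t^π(x') = P_{φ,t}^π(z'|z) / P_{φ,t}^π(z') for all z, z' ∈ Z and all x' ∈ X with φ(x') = z'. -/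
namespace MarkovAbstraction

noncomputable section

variable {X A Z : Type*} [Fintype X] [Fintype A] [Fintype Z] [DecidableEq Z]

/-- **Theorem 2.** If `φ` is a Markov abstraction for every policy in `Π_φ` and the
Inverse Model condition holds for every timestep, then the Density Ratio condition also
holds for every timestep. -/
theorem markov_and_inverse_model_implies_density_ratio
    (T : X → A → X → ℝ) (P0 : X → ℝ) (φ : X → Z)
    (hT : IsKernel T) (hP0 : IsDist P0)
    -- positivity of the denominators appearing in the definitions:
    (hpos : ∀ π : ℕ → A → X → ℝ, IsPolicy π → InPolicyClass φ π →
      (∀ (t : ℕ) (z : Z), 0 < ∑ x : X, if φ x = z then Pvis T π P0 t x else 0) ∧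
      (∀ (t : ℕ) (a : A) (zp : Z) (h : List (A × Z)) (z : Z),
        0 < ∑ xt : X, if φ xt = z then
            ∑ xtp : X, if φ xtp = zp then T xt a xtp * BelK T π P0 φ t h zp xtp else 0
          else 0) ∧
      (∀ (t : ℕ) (x' x : X), 0 < PNext T π t x' x) ∧
      (∀ (t : ℕ) (x : X), 0 < Pvis T π P0 t x) ∧
      (∀ (t : ℕ) (z' z : Z), 0 < PZNext T π P0 φ t z' z) ∧
      (∀ (t : ℕ) (z' : Z), 0 < PZ T π P0 φ t z'))
    -- φ is a Markov abstraction over Π_φ: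
    (hMarkov : ∀ π : ℕ → A → X → ℝ, IsPolicy π → InPolicyClass φ π →
      ∀ (t : ℕ) (hist : List (A × Z)), hist ≠ [] →
        ∀ (z : Z) (x : X), BelK T π P0 φ t hist z x = Bel0 T π P0 φ t z x)
    -- Inverse Model condition:
    (hInv : ∀ π : ℕ → A → X → ℝ, IsPolicy π → InPolicyClass φ π →
      ∀ (t : ℕ) (a : A) (z z' : Z) (x x' : X), φ x = z → φ x' = z' →
        InvModelZ T π P0 φ t a z' z x = InvModel T π t a x' x) :
    -- Density Ratio condition:
    ∀ π : ℕ → A → X → ℝ, IsPolicy π → InPolicyClass φ π →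
      ∀ (t : ℕ) (z z' : Z) (x' : X), φ x' = z' →
        PNextZ T π P0 φ t x' z / Pvis T π P0 t x'
          = PZNext T π P0 φ t z' z / PZ T π P0 φ t z' := by
  intro pi hpi hcl t z z' x' hx'
  obtain ⟨h1, h2, _h3, h4, _h5, h6⟩ := hpos pi hpi hcl
  -- a representative ground state of z
  obtain ⟨x0, hx0⟩ : ∃ x0, φ x0 = z := by
    by_contra h
    push_neg at h
    have h1z := h1 t z
    simp only [if_neg (h _), Finset.sum_const_zero] at h1z
    exact lt_irrefl _ h1z
  have hTZpos : ∀ a, 0 < TZ T pi P0 φ t z' a z := fun a => by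
    have := h2 t a z [] z'
    simpa [TZ, BelK] using this
  have hPZ : 0 < PZ T pi P0 φ t z' := h6 t z'
  -- key identity from the Markov hypothesis with one-step history [(a, z)]
  have star : ∀ (a : A) (x1 : X), φ x1 = z' →
      (∑ xp : X, T x1 a xp * Bel0 T pi P0 φ t z xp)
        = TZ T pi P0 φ t z' a z * Pvis T pi P0 t x1 / PZ T pi P0 φ t z' := by
    intro a x1 h1x
    have hm := hMarkov pi hpi hcl t [(a, z)] (by simp) z' x1
    simp only [BelK] at hm
    rw [if_pos h1x] at hm
    have hD : (∑ xt : X, if φ xt = z' then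
        ∑ xtp : X, if φ xtp = z then T xt a xtp * Bel0 T pi P0 φ t z xtp else 0 else 0)
        = TZ T pi P0 φ t z' a z := rfl
    rw [hD] at hm
    have hB : Bel0 T pi P0 φ t z' x1 = Pvis T pi P0 t x1 / PZ T pi P0 φ t z' := by
      unfold Bel0
      rw [if_pos h1x]
      rfl
    rw [hB] at hm
    rw [div_eq_div_iff (hTZpos a).ne' hPZ.ne'] at hm
    rw [eq_div_iff hPZ.ne']
    linarith [hm]
  -- aggregate over actions
  set S := ∑ a : A, pi t a x0 * TZ T pi P0 φ t z' a z with hS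
  have key : ∀ (x1 : X), φ x1 = z' →
      PNextZ T pi P0 φ t x1 z = Pvis T pi P0 t x1 / PZ T pi P0 φ t z' * S := by
    intro x1 h1x
    unfold PNextZ PNext
    have step1 : (∑ x : X, (∑ a : A, T x1 a x * pi t a x) * Bel0 T pi P0 φ t z x)
        = ∑ a : A, ∑ x : X, T x1 a x * pi t a x * Bel0 T pi P0 φ t z x := by
      rw [Finset.sum_comm]
      exact Finset.sum_congr rfl fun x _ => by rw [Finset.sum_mul]
    rw [step1]
    have step2 : ∀ a : A, (∑ x : X, T x1 a x * pi t a x * Bel0 T pi P0 φ t z x)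
        = pi t a x0 * ∑ x : X, T x1 a x * Bel0 T pi P0 φ t z x := by
      intro a
      rw [Finset.mul_sum]
      refine Finset.sum_congr rfl fun x _ => ?_
      by_cases hxz : φ x = z
      · rw [hcl t a x x0 (hxz.trans hx0.symm)]
        ring
      · have hb0 : Bel0 T pi P0 φ t z x = 0 := by simp [Bel0, hxz]
        rw [hb0]
        ring
    calc (∑ a : A, ∑ x : X, T x1 a x * pi t a x * Bel0 T pi P0 φ t z x)
        = ∑ a : A, pi t a x0 * (TZ T pi P0 φ t z' a z * Pvis T pi P0 t x1 / PZ T pi P0 φ t z') := by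
          refine Finset.sum_congr rfl fun a _ => ?_
          rw [step2 a, star a x1 h1x]
      _ = Pvis T pi P0 t x1 / PZ T pi P0 φ t z' * S := by
          rw [hS, Finset.mul_sum]
          refine Finset.sum_congr rfl fun a _ => ?_
          ring
  have hPZN : PZNext T pi P0 φ t z' z = S := by
    unfold PZNext
    have : (∑ x1 : X, if φ x1 = z' then PNextZ T pi P0 φ t x1 z else 0)
        = ∑ x1 : X, (if φ x1 = z' then Pvis T pi P0 t x1 else 0) * (S / PZ T pi P0 φ t z') := by
      refine Finset.sum_congr rfl fun x1 _ => ?_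
      by_cases h1x : φ x1 = z'
      · rw [if_pos h1x, if_pos h1x, key x1 h1x]
        ring
      · rw [if_neg h1x, if_neg h1x, zero_mul]
    rw [this, ← Finset.sum_mul]
    have hPZeq : (∑ x1 : X, if φ x1 = z' then Pvis T pi P0 t x1 else 0) = PZ T pi P0 φ t z' := rfl
    rw [hPZeq]
    field_simp
  rw [key x' hx', hPZN]
  have hPv : 0 < Pvis T pi P0 t x' := h4 t x'
  field_simp

end

end MarkovAbstraction
end

section
/- (Appendix D theorem: Strong Markov conditions imply kinematic inseparability.) Suppose φ : X → Z is an abstraction of the MDP M = (X, A, R, T, γ) such that for every policy π in the policy class Π_φ and every timestep t both the Inverse Model condition (I_{φ,t}^π(a|z',z) = I_t^π(a|x',x) for all a ∈ A, z, z' ∈ Z, x ∈ z, x' ∈ z') and the Strong Density Ratio condition (P_t^π(x'|x)/P_t^π(x') = P_{φ,t}^π(z'|z)/P_{φ,t}^π(z') for all z, z' ∈ Z and all x ∈ z, x' ∈ z') hold. Then φ is a kinematic inseparability abstraction over Π_φ: for every π ∈ Π_φ, every t, every a ∈ A, and all x, x'' ∈ X and x₁', x₂' ∈ X with φ(x₁')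 = φ(x₂'), it holds that P_t^π(x, a | x₁') = P_t^π(x, a | x₂') (backwards KI) and T(x'' | a, x₁') = T(x'' | a, x₂') (forwards KI). -/
namespace MarkovAbstraction

noncomputable section

variable {X A Z : Type*} [Fintype X] [Fintype A] [Fintype Z] [DecidableEq Z]

/-- **Appendix D theorem.** If the Inverse Model condition and the Strong Density Ratio
condition hold for every policy in `Π_φ` and every timestep, then `φ` is a kinematic
inseparability abstraction over `Π_φ`: ground states sharing an abstract state satisfy
both backwards KI (equal backwards dynamics) and forwards KI (equal transition dynamics). -/
theorem strong_markov_implies_kinematic_inseparability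
    (T : X → A → X → ℝ) (P0 : X → ℝ) (φ : X → Z)
    (hT : IsKernel T) (hP0 : IsDist P0)
    -- positivity of the denominators appearing in the definitions:
    (hpos : ∀ π : ℕ → A → X → ℝ, IsPolicy π → InPolicyClass φ π →
      (∀ (t : ℕ) (z : Z), 0 < ∑ x : X, if φ x = z then Pvis T π P0 t x else 0) ∧
      (∀ (t : ℕ) (x' x : X), 0 < PNext T π t x' x) ∧
      (∀ (t : ℕ) (x : X), 0 < Pvis T π P0 t x) ∧
      (∀ (t : ℕ) (z' z : Z), 0 < PZNext T π P0 φ t z' z) ∧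
      (∀ (t : ℕ) (z' : Z), 0 < PZ T π P0 φ t z') ∧
      (∀ (t : ℕ) (x' : X),
        0 < ∑ xt : X, ∑ ap : A, T x' ap xt * π t ap xt * Pvis T π P0 t xt))
    -- Inverse Model condition:
    (hInv : ∀ π : ℕ → A → X → ℝ, IsPolicy π → InPolicyClass φ π →
      ∀ (t : ℕ) (a : A) (z z' : Z) (x x' : X), φ x = z → φ x' = z' →
        InvModelZ T π P0 φ t a z' z x = InvModel T π t a x' x)
    -- Strong Density Ratio condition:
    (hStrong : ∀ π : ℕ → A → X → ℝ, IsPolicy π → InPolicyClass φ π →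
      ∀ (t : ℕ) (z z' : Z) (x x' : X), φ x = z → φ x' = z' →
        PNext T π t x' x / Pvis T π P0 t x'
          = PZNext T π P0 φ t z' z / PZ T π P0 φ t z') :
    ∀ π : ℕ → A → X → ℝ, IsPolicy π → InPolicyClass φ π →
      ∀ (t : ℕ) (a : A) (x x'' x1 x2 : X), φ x1 = φ x2 →
        PBack T π P0 t x a x1 = PBack T π P0 t x a x2 ∧
          T x'' a x1 = T x'' a x2 := by
  intro π hπ hπφ t a x x'' x1 x2 hφ
  obtain ⟨hS, hN, hP, hZN, hZ, hD⟩ := hpos π hπ hπφ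
  constructor
  · -- backwards KI
    have R1 : ∀ xt : X, PNext T π t x1 xt * Pvis T π P0 t x2
        = PNext T π t x2 xt * Pvis T π P0 t x1 := by
      intro xt
      have h1 := hStrong π hπ hπφ t (φ xt) (φ x1) xt x1 rfl rfl
      have h2 := hStrong π hπ hπφ t (φ xt) (φ x1) xt x2 rfl hφ.symm
      have h3 := h1.trans h2.symm
      rwa [div_eq_div_iff (hP t x1).ne' (hP t x2).ne'] at h3
    have R2 : ∀ (xt : X) (a' : A),
        T x1 a' xt * π t a' xt * Pvis T π P0 t x2
        = T x2 a' xt * π t a' xt * Pvis T π P0 t x1 := by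
      intro xt a'
      have h1 := hInv π hπ hπφ t a' (φ xt) (φ x1) xt x1 rfl rfl
      have h2 := hInv π hπ hπφ t a' (φ xt) (φ x1) xt x2 rfl hφ.symm
      have hinv := h1.symm.trans h2
      unfold InvModel at hinv
      rw [div_eq_div_iff (hN t x1 xt).ne' (hN t x2 xt).ne'] at hinv
      have r1 := R1 xt
      have key : T x1 a' xt * π t a' xt * Pvis T π P0 t x2 * PNext T π t x2 xt
          = T x2 a' xt * π t a' xt * Pvis T π P0 t x1 * PNext T π t x2 xt := by
        linear_combination Pvis T π P0 t x2 * hinv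
          + (T x2 a' xt * π t a' xt) * r1
      exact mul_right_cancel₀ (hN t x2 xt).ne' key
    have R3 : (∑ xt : X, ∑ ap : A, T x1 ap xt * π t ap xt * Pvis T π P0 t xt)
          * Pvis T π P0 t x2
        = (∑ xt : X, ∑ ap : A, T x2 ap xt * π t ap xt * Pvis T π P0 t xt)
          * Pvis T π P0 t x1 := by
      rw [Finset.sum_mul, Finset.sum_mul]
      refine Finset.sum_congr rfl fun xt _ => ?_
      rw [Finset.sum_mul, Finset.sum_mul]
      refine Finset.sum_congr rfl fun ap _ => ?_
      linear_combination Pvis T π P0 t xt * R2 xt ap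
    unfold PBack
    rw [div_eq_div_iff (hD t x1).ne' (hD t x2).ne']
    have r2 := R2 x a
    have key : T x1 a x * π t a x * Pvis T π P0 t x
          * (∑ xt : X, ∑ ap : A, T x2 ap xt * π t ap xt * Pvis T π P0 t xt)
          * Pvis T π P0 t x2
        = T x2 a x * π t a x * Pvis T π P0 t x
          * (∑ xt : X, ∑ ap : A, T x1 ap xt * π t ap xt * Pvis T π P0 t xt)
          * Pvis T π P0 t x2 := by
      linear_combination (Pvis T π P0 t x
          * (∑ xt : X, ∑ ap : A, T x2 ap xt * π t ap xt * Pvis T π P0 t xt)) * r2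
        - (T x2 a x * π t a x * Pvis T π P0 t x) * R3
    exact mul_right_cancel₀ (hP t x2).ne' key
  · -- forwards KI, via the uniform policy
    have hcard : (Fintype.card A : ℝ) ≠ 0 := by
      intro h
      have hs := hπ.2 0 x
      have hA : IsEmpty A := Fintype.card_eq_zero_iff.mp (by exact_mod_cast h)
      rw [Finset.univ_eq_empty, Finset.sum_empty] at hs
      exact zero_ne_one hs
    have hcardpos : (0 : ℝ) < Fintype.card A :=
      lt_of_le_of_ne (Nat.cast_nonneg _) (Ne.symm hcard)
    set c : ℝ := (Fintype.card A : ℝ)⁻¹ with hc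
    have hcpos : 0 < c := inv_pos.mpr hcardpos
    set πu : ℕ → A → X → ℝ := fun _ _ _ => c with hπudef
    have hπu : IsPolicy πu := by
      refine ⟨fun _ _ _ => hcpos.le, fun t' x' => ?_⟩
      simp only [hπudef, Finset.sum_const, Finset.card_univ, nsmul_eq_mul, hc]
      exact mul_inv_cancel₀ hcard
    have hπuφ : InPolicyClass φ πu := fun _ _ _ _ _ => rfl
    obtain ⟨_, hNu, hPu, _, _, _⟩ := hpos πu hπu hπuφ
    have hNueq : PNext T πu t x'' x1 = PNext T πu t x'' x2 := by
      have h1 := hStrong πu hπu hπuφ t (φ x1) (φ x'') x1 x'' rfl rfl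
      have h2 := hStrong πu hπu hπuφ t (φ x1) (φ x'') x2 x'' hφ.symm rfl
      have h3 := h1.trans h2.symm
      rw [div_eq_div_iff (hPu t x'').ne' (hPu t x'').ne'] at h3
      exact mul_right_cancel₀ (hPu t x'').ne' h3
    have hinv1 := hInv πu hπu hπuφ t a (φ x1) (φ x'') x1 x'' rfl rfl
    have hinv2 := hInv πu hπu hπuφ t a (φ x1) (φ x'') x2 x'' hφ.symm rfl
    have h4 : InvModel T πu t a x'' x1 = InvModel T πu t a x'' x2 := by
      rw [← hinv1, ← hinv2]
      rfl
    unfold InvModel at h4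
    rw [hNueq, div_eq_div_iff (hNu t x'' x2).ne' (hNu t x'' x2).ne'] at h4
    have h5 := mul_right_cancel₀ (hNu t x'' x2).ne' h4
    have hπc : πu t a x1 = c := rfl
    rw [hπc] at h5
    exact mul_right_cancel₀ hcpos.ne' h5

end

end MarkovAbstraction
end

section
/- (Backwards KI sub-claim from the Appendix D proof.) Fix a timestep t and a policy π ∈ Π_φ, and suppose the Inverse Model condition (I_{φ,t}^π(a|z',z) = I_t^π(a|x',x) for all a ∈ A, z, z' ∈ Z, x ∈ z, x' ∈ z') and the Strong Density Ratio condition (P_t^π(x'|x)/P_t^π(x') = P_{φ,t}^π(z'|z)/P_{φ,t}^π(z') for all z, z' ∈ Z and all x ∈ z, x' ∈ z') hold. Then for all a ∈ A, all x ∈ X, and all x₁', x₂' ∈ X with φ(x₁') = φ(x₂'): P_t^π(x, a | x₁') = P_t^π(x, a | x₂'), where P_t^π(x, a | x') = T(x'|a,x) π_t(a|x) P_t^π(x) / Σ_{x̃∈X} Σ_{ã∈A} T(x'|ã,x̃) π_t(ã|x̃) P_t^π(x̃). -/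
namespace MarkovAbstraction

noncomputable section

variable {X A Z : Type*} [Fintype X] [Fintype A] [Fintype Z] [DecidableEq Z]

/-- **Backwards KI sub-claim (Appendix D).** For a fixed timestep `t` and policy `π ∈ Π_φ`,
the Inverse Model condition and the Strong Density Ratio condition imply backwards
kinematic inseparability: ground states sharing an abstract state have equal backwards
dynamics `P_t^π(x, a | x')`. -/
theorem strong_markov_implies_backwards_KI
    (T : X → A → X → ℝ) (π : ℕ → A → X → ℝ) (P0 : X → ℝ) (φ : X → Z)
    (hT : IsKernel T) (hπ : IsPolicy π) (hP0 : IsDist P0)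
    (hπΦ : InPolicyClass φ π) (t : ℕ)
    -- positivity of the denominators appearing in the definitions:
    (hpos1 : ∀ z : Z, 0 < ∑ x : X, if φ x = z then Pvis T π P0 t x else 0)
    (hpos2 : ∀ x' x : X, 0 < PNext T π t x' x)
    (hpos3 : ∀ x : X, 0 < Pvis T π P0 t x)
    (hpos4 : ∀ z' z : Z, 0 < PZNext T π P0 φ t z' z)
    (hpos5 : ∀ z' : Z, 0 < PZ T π P0 φ t z')
    (hpos6 : ∀ x' : X,
      0 < ∑ xt : X, ∑ ap : A, T x' ap xt * π t ap xt * Pvis T π P0 t xt)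
    -- Inverse Model condition:
    (hInv : ∀ (a : A) (z z' : Z) (x x' : X), φ x = z → φ x' = z' →
      InvModelZ T π P0 φ t a z' z x = InvModel T π t a x' x)
    -- Strong Density Ratio condition:
    (hStrong : ∀ (z z' : Z) (x x' : X), φ x = z → φ x' = z' →
      PNext T π t x' x / Pvis T π P0 t x'
        = PZNext T π P0 φ t z' z / PZ T π P0 φ t z') :
    ∀ (a : A) (x : X) (x1 x2 : X), φ x1 = φ x2 →
      PBack T π P0 t x a x1 = PBack T π P0 t x a x2 := by
  intro a x x1 x2 hx
  have key : ∀ x' : X, PBack T π P0 t x a x' =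
      InvModelZ T π P0 φ t a (φ x') (φ x) x *
        ((PZNext T π P0 φ t (φ x') (φ x) / PZ T π P0 φ t (φ x')) *
          Pvis T π P0 t x) /
      ∑ xt : X, (PZNext T π P0 φ t (φ x') (φ xt) / PZ T π P0 φ t (φ x')) *
        Pvis T π P0 t xt := by
    intro x'
    have hTπ : ∀ xt : X, T x' a xt * π t a xt
        = InvModelZ T π P0 φ t a (φ x') (φ xt) xt * PNext T π t x' xt := by
      intro xt
      rw [hInv a (φ xt) (φ x') xt x' rfl rfl, InvModel,
        div_mul_cancel₀ _ (hpos2 x' xt).ne']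
    have hPN : ∀ xt : X, PNext T π t x' xt
        = (PZNext T π P0 φ t (φ x') (φ xt) / PZ T π P0 φ t (φ x'))
          * Pvis T π P0 t x' := by
      intro xt
      exact (div_eq_iff (hpos3 x').ne').mp (hStrong (φ xt) (φ x') xt x' rfl rfl)
    have hS : 0 < ∑ xt : X, (PZNext T π P0 φ t (φ x') (φ xt) / PZ T π P0 φ t (φ x')) *
        Pvis T π P0 t xt := by
      refine Finset.sum_pos (fun i _ => ?_) ⟨x', Finset.mem_univ x'⟩
      exact mul_pos (div_pos (hpos4 _ _) (hpos5 _)) (hpos3 i)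
    have hden : ∑ xt : X, ∑ ap : A, T x' ap xt * π t ap xt * Pvis T π P0 t xt
        = Pvis T π P0 t x' *
          ∑ xt : X, (PZNext T π P0 φ t (φ x') (φ xt) / PZ T π P0 φ t (φ x')) *
            Pvis T π P0 t xt := by
      rw [Finset.mul_sum]
      refine Finset.sum_congr rfl fun xt _ => ?_
      have h1 : ∑ ap : A, T x' ap xt * π t ap xt * Pvis T π P0 t xt
          = PNext T π t x' xt * Pvis T π P0 t xt := by
        rw [PNext, Finset.sum_mul]
      rw [h1, hPN xt]; ring
    rw [PBack, hden, hTπ x, hPN x]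
    rw [div_eq_div_iff (mul_ne_zero (hpos3 x').ne' hS.ne') hS.ne']
    ring
  rw [key x1, key x2, hx]

end

end MarkovAbstraction
end

section
/- (Inverse Model condition alone is insufficient; Section 4.2 counterexample.) There exist a finite MDP M = (X, A, R, T, γ) with deterministic transitions, an abstraction φ : X → Z, an initial state distribution P_0, and a policy π ∈ Π_φ such that: (i) the Inverse Model condition holds (I_{φ,t}^π(a|z',z) = I_t^π(a|x',x) for all a ∈ A, z, z' ∈ Z, x ∈ z, x' ∈ z', at every timestep t for which the relevant denominators are positive), but (ii) φ is not a Markov abstraction: there exist a timestep t, abstract states z_{t-1}, z_t, an action a_{t-1}, and x ∈ X with B_{φ,t}^{π(1)}(x | z_t, a_{t-1}, z_{t-1}) ≠ B_{φ,t}^π(x | z_t). In particular, the example with X = {x₀, x₁, x₂, x₃}, A = {a₀, a₁}, where a₁ deterministically sends x₀ ↦ x₁, x₁ ↦ x₁, x₂ ↦ x₂, x₃ ↦ x₂ and a₀ deterministically sends x₁ ↦ x₃, x₂ ↦ x₀, x₀ ↦ x₀, x₃ ↦ x₃, with abstraction φ(x₁) = φ(x₂) = z_B, φ(x₀) = z_A,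 φ(x₃) = z_C, and the uniform random policy, witnesses this: the one-step abstract transition probability to z_A from (a₀, z_B) is 0.5, but conditioned additionally on (a₁, z_A) one step earlier it is 1. -/
namespace MarkovAbstraction

noncomputable section

variable {X A Z : Type*} [Fintype X] [Fintype A] [Fintype Z] [DecidableEq Z]

/-- Deterministic successor function of the counterexample. -/
def cf : Fin 2 → Fin 4 → Fin 4 := ![![0, 3, 0, 3], ![1, 1, 2, 2]]

/-- Transition kernel of the counterexample. -/
def cT : Fin 4 → Fin 2 → Fin 4 → ℝ := fun x' a x => if x' = cf a x then 1 else 0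

/-- Abstraction of the counterexample. -/
def cφ : Fin 4 → Fin 3 := ![0, 1, 1, 2]

/-- Uniform policy. -/
def cπ : ℕ → Fin 2 → Fin 4 → ℝ := fun _ _ _ => 1 / 2

/-- Uniform initial distribution. -/
def cP0 : Fin 4 → ℝ := fun _ => 1 / 4

lemma pvis_const : ∀ (t : ℕ) (x : Fin 4), Pvis cT cπ cP0 t x = 1 / 4
  | 0, _ => rfl
  | t + 1, x => by
    simp only [Pvis, pvis_const t, cT, cπ, cf]
    fin_cases x <;>
      · simp [Fin.sum_univ_two, Fin.sum_univ_four]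
        norm_num

lemma bel0_eq (t : ℕ) (z : Fin 3) (x : Fin 4) :
    Bel0 cT cπ cP0 cφ t z x
      = if cφ x = z then (if z = 1 then 1 / 2 else 1) else 0 := by
  fin_cases z <;> fin_cases x <;>
    · simp [Bel0, cφ, pvis_const, Fin.sum_univ_four]
      try norm_num

/-- Concrete values of the abstract next-state dynamics. -/
def pzv : Fin 3 → Fin 3 → ℝ := fun z' z =>
  if z' = 1 then 1 / 2 else if z = 1 then 1 / 4 else if z' = z then 1 / 2 else 0

lemma pznext_eq (t : ℕ) (z' z : Fin 3) :
    PZNext cT cπ cP0 cφ t z' z = pzv z' z := by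
  fin_cases z <;> fin_cases z' <;>
    · simp only [PZNext, PNextZ, PNext, bel0_eq]
      simp [cT, cπ, cφ, cf, pzv, Fin.sum_univ_two, Fin.sum_univ_four]
      try norm_num

/-- Concrete values of the abstract transition model. -/
def tzv : Fin 3 → Fin 2 → Fin 3 → ℝ := fun z' a z =>
  if a = 1 then (if z' = 1 then 1 else 0)
  else if z' = 1 then 0 else if z = 1 then 1 / 2 else if z' = z then 1 else 0

lemma tz_eq (t : ℕ) (z' : Fin 3) (a : Fin 2) (z : Fin 3) :
    TZ cT cπ cP0 cφ t z' a z = tzv z' a z := by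
  fin_cases z <;> fin_cases a <;> fin_cases z' <;>
    · simp only [TZ, bel0_eq]
      simp [cT, cφ, cf, tzv, Fin.sum_univ_four]
      try norm_num

/-- **Section 4.2 counterexample.** The Inverse Model condition alone is insufficient:
there is a finite MDP with deterministic transitions (the four-state, two-action example
of Figure 3), an abstraction `φ`, an initial state distribution, and a policy `π ∈ Π_φ`
such that the Inverse Model condition holds at every timestep for which the relevant
denominators are positive, yet `φ` is not a Markov abstraction: some `1`-step belief
distribution differs from the `0`-step belief distribution. -/
theorem inverse_model_condition_insufficient :
    ∃ (T Rw : Fin 4 → Fin 2 → Fin 4 → ℝ) (γ : ℝ) (φ : Fin 4 → Fin 3)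
      (π : ℕ → Fin 2 → Fin 4 → ℝ) (P0 : Fin 4 → ℝ),
      0 ≤ γ ∧ γ < 1 ∧
      IsKernel T ∧ IsPolicy π ∧ IsDist P0 ∧
      -- deterministic transitions:
      (∀ (a : Fin 2) (x : Fin 4), ∃ x' : Fin 4,
        ∀ y : Fin 4, T y a x = if y = x' then 1 else 0) ∧
      -- π belongs to the policy class Π_φ:
      InPolicyClass φ π ∧
      -- (i) the Inverse Model condition holds whenever the relevant denominators are positive:
      (∀ (t : ℕ) (a : Fin 2) (z z' : Fin 3) (x x' : Fin 4), φ x = z → φ x' = z' →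
        0 < PNext T π t x' x →
        0 < PZNext T π P0 φ t z' z →
        (0 < ∑ y : Fin 4, if φ y = z then Pvis T π P0 t y else 0) →
        InvModelZ T π P0 φ t a z' z x = InvModel T π t a x' x) ∧
      -- (ii) φ is not a Markov abstraction:
      (∃ (t : ℕ) (a : Fin 2) (zprev zt : Fin 3) (x : Fin 4),
        BelK T π P0 φ t [(a, zprev)] zt x ≠ Bel0 T π P0 φ t zt x) := by
  refine ⟨cT, fun _ _ _ => 0, 0, cφ, cπ, cP0, le_refl 0, by norm_num, ?_, ?_, ?_, ?_, ?_, ?_, ?_⟩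
  · constructor
    · intro x' a x
      unfold cT
      split <;> norm_num
    · intro a x
      fin_cases a <;> fin_cases x <;> simp [cT, cf, Fin.sum_univ_four]
  · exact ⟨fun _ _ _ => by norm_num [cπ], fun _ _ => by norm_num [cπ, Fin.sum_univ_two]⟩
  · exact ⟨fun _ => by norm_num [cP0], by norm_num [cP0, Fin.sum_univ_four]⟩
  · exact fun a x => ⟨cf a x, fun y => rfl⟩
  · exact fun _ _ _ _ _ => rfl
  · intro t a z z' x x' hx hx' h1 h2 h3
    subst hx hx'
    fin_cases a <;> fin_cases x <;> fin_cases x' <;>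
      first
      | (exfalso
         revert h1
         simp [PNext, cT, cπ, cf, Fin.sum_univ_two]
         done)
      | (clear h1 h2 h3
         simp only [InvModelZ, InvModel, tz_eq, pznext_eq]
         simp [PNext, cT, cπ, cφ, cf, tzv, pzv, Fin.sum_univ_two]
         try norm_num)
  · refine ⟨0, 1, 0, 1, 1, ?_⟩
    simp [BelK, Bel0, cT, cπ, cφ, cf, cP0, Fin.sum_univ_four, Pvis]
    norm_num

end

end MarkovAbstraction
end
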